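/- For all integers n ≥ 0 and e with 0 ≤ e ≤ n(n−1)/2, there exists an almost alternating threshold graph on n vertices with exactly e edges. -/

import Mathlib

/-!
Common definitions: threshold graphs from binary codes, counts of matchings and
independent sets, lex and colex graphs, and almost alternating codes.

A binary code is a `List Bool` whose head is the *leftmost* (most significant,
last added) digit; `true` stands for the digit `1` and `false` for `0`.
Reading the code from right to left, each digit adds a vertex: a `1` adds a
dominating vertex and a `0` adds an isolated vertex.  Equivalently, the vertex
at position `i` (from the left) is adjacent to every vertex to its right iff
its digit is `1`.  Note that the value of the rightmost digit (the star) never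
affects the graph.
-/

/-- The threshold graph encoded by a binary code `σ`. -/
def threshOf (σ : List Bool) : SimpleGraph (Fin σ.length) where
  Adj i j := i ≠ j ∧ σ.get (min i j) = true
  symm := by
    constructor
    intro i j h
    refine ⟨h.1.symm, ?_⟩
    rw [min_comm]
    exact h.2
  loopless := by
    constructor
    intro i h
    exact h.1 rfl

/-- The number of edges of a graph. -/
noncomputable def edgeCount {V : Type*} (G : SimpleGraph V) : ℕ := Nat.card G.edgeSet

/-- `M` is a matching of `G`: a set of pairwise disjoint edges of `G`. -/
def IsMatchingSet {V : Type*} (G : SimpleGraph V) (M : Finset (Sym2 V)) : Prop :=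
  (∀ e ∈ M, e ∈ G.edgeSet) ∧ ∀ e ∈ M, ∀ f ∈ M, e ≠ f → ∀ v : V, v ∈ e → v ∉ f

/-- `m(G)`: the total number of matchings of `G` (including the empty matching). -/
noncomputable def matchCount {V : Type*} (G : SimpleGraph V) : ℕ :=
  Nat.card {M : Finset (Sym2 V) // IsMatchingSet G M}

/-- `m_k(G)`: the number of matchings of `G` of size `k`. -/
noncomputable def matchCountK {V : Type*} (G : SimpleGraph V) (k : ℕ) : ℕ :=
  Nat.card {M : Finset (Sym2 V) // IsMatchingSet G M ∧ M.card = k}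

/-- `i(G)`: the number of independent sets of `G` (including the empty set). -/
noncomputable def indCount {V : Type*} (G : SimpleGraph V) : ℕ :=
  Nat.card {S : Finset V // ∀ u ∈ S, ∀ v ∈ S, ¬ G.Adj u v}

/-- `i_k(G)`: the number of independent sets of `G` of size `k`. -/
noncomputable def indCountK {V : Type*} (G : SimpleGraph V) (k : ℕ) : ℕ :=
  Nat.card {S : Finset V // (∀ u ∈ S, ∀ v ∈ S, ¬ G.Adj u v) ∧ S.card = k}

/-- Two codes encode the same threshold graph: they have the same length and agree
except possibly in the rightmost (starred) digit. -/
def CodeEquiv (σ τ : List Bool) : Prop := σ.length = τ.length ∧ σ.dropLast = τ.dropLast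

/-- Words that are concatenations of copies of the letters `a = 01` and `b = 10`. -/
inductive IsABWord : List Bool → Prop
  | nil : IsABWord []
  | a {w : List Bool} : IsABWord w → IsABWord (false :: true :: w)
  | b {w : List Bool} : IsABWord w → IsABWord (true :: false :: w)

/-- `w` is a concatenation of `α` copies of the letter `a = 01` and `β` copies of the
letter `b = 10`, in some order. -/
def IsABWordWith (α β : ℕ) (w : List Bool) : Prop :=
  ∃ ls : List (List Bool), (∀ x ∈ ls, x = [false, true] ∨ x = [true, false]) ∧
    ls.count [false, true] = α ∧ ls.count [true, false] = β ∧ w = ls.flatten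

/-- A code is almost alternating if (possibly after reinterpreting the starred rightmost
digit) it is an initial constant block followed by a word in the letters `a = 01` and
`b = 10`, either using the rightmost digit as the final digit of the last letter
(unstarred case) or keeping the rightmost digit separate after the word (starred case). -/
def IsAlmostAltCode (σ : List Bool) : Prop :=
  ∃ τ : List Bool, CodeEquiv σ τ ∧
    ∃ (t : ℕ) (c : Bool) (w : List Bool), IsABWord w ∧
      (τ = List.replicate t c ++ w ∨ ∃ d : Bool, τ = List.replicate t c ++ w ++ [d])

/-- A small almost alternating code: the initial block consists of `0`'s (or is empty). -/
def IsSmallAACode (σ : List Bool) : Prop :=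
  ∃ τ : List Bool, CodeEquiv σ τ ∧
    ∃ (t : ℕ) (w : List Bool), IsABWord w ∧
      (τ = List.replicate t false ++ w ∨ ∃ d : Bool, τ = List.replicate t false ++ w ++ [d])

/-- A large almost alternating code: the initial block is a nonempty block of `1`'s. -/
def IsLargeAACode (σ : List Bool) : Prop :=
  ∃ τ : List Bool, CodeEquiv σ τ ∧
    ∃ (t : ℕ) (w : List Bool), 1 ≤ t ∧ IsABWord w ∧
      (τ = List.replicate t true ++ w ∨ ∃ d : Bool, τ = List.replicate t true ++ w ++ [d])

/-- A code has a bracketed string if (possibly after reinterpreting the starred rightmost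
digit) it contains a substring `1 0^j 1` or `0 1^j 0` with `j ≥ 3`. -/
def HasBracketedString (σ : List Bool) : Prop :=
  ∃ τ : List Bool, CodeEquiv σ τ ∧ ∃ (x y : List Bool) (j : ℕ), 3 ≤ j ∧
    (τ = x ++ [true] ++ List.replicate j false ++ [true] ++ y ∨
     τ = x ++ [false] ++ List.replicate j true ++ [false] ++ y)

/-- A code has a separation issue if it contains two pairs of repeated digits separated by
a substring of odd length, where the first pair is immediately preceded by the opposite
digit and the second pair is followed by at least one further digit. -/
def HasSeparationIssue (σ : List Bool) : Prop :=
  ∃ (x m y : List Bool) (d c : Bool),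
    Odd m.length ∧ y ≠ [] ∧ σ = x ++ [!d, d, d] ++ m ++ [c, c] ++ y

/-- The colex graph `C(n,e)`: the graph on `Fin n` whose edges are the first `e` pairs in
the colexicographic order.  The pair `{i, j}` with `i < j` has rank `j(j-1)/2 + i` in
this order. -/
def colexGraph (n e : ℕ) : SimpleGraph (Fin n) where
  Adj i j := i ≠ j ∧ max i.val j.val * (max i.val j.val - 1) / 2 + min i.val j.val < e
  symm := by
    constructor
    intro i j h
    refine ⟨h.1.symm, ?_⟩
    rw [max_comm j.val i.val, min_comm j.val i.val]
    exact h.2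
  loopless := by
    constructor
    intro i h
    exact h.1 rfl

/-- The lex graph `L(n,e)`: the graph on `Fin n` whose edges are the first `e` pairs in
the lexicographic order.  The pair `{i, j}` with `i < j` has rank
`i(n-1) - i(i-1)/2 + (j - i - 1)` in this order. -/
def lexGraph (n e : ℕ) : SimpleGraph (Fin n) where
  Adj i j := i ≠ j ∧
    min i.val j.val * (n - 1) - min i.val j.val * (min i.val j.val - 1) / 2
      + (max i.val j.val - min i.val j.val - 1) < e
  symm := by
    constructor
    intro i j h
    refine ⟨h.1.symm, ?_⟩
    rw [max_comm j.val i.val, min_comm j.val i.val]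
    exact h.2
  loopless := by
    constructor
    intro i h
    exact h.1 rfl

def wt : List Bool → ℕ
  | [] => 0
  | b :: s => (if b then s.length else 0) + wt s

lemma wt_eq_sum (σ : List Bool) :
    wt σ = ∑ i : Fin σ.length, if σ.get i = true then σ.length - 1 - i.val else 0 := by
  induction σ with
  | nil => simp [wt]
  | cons b s ih =>
    simp only [List.length_cons]
    rw [Fin.sum_univ_succ]
    show (if b then s.length else 0) + wt s = _
    rw [ih]
    have h2 : ∀ x : Fin s.length, s.length - 1 - (x : ℕ) = s.length - ((x : ℕ) + 1) :=
      fun x => by omega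
    simp [List.get_eq_getElem, h2]

lemma edgeCount_threshOf (σ : List Bool) : edgeCount (threshOf σ) = wt σ := by
  classical
  set n := σ.length with hn
  have hbij : Function.Bijective
      (fun p : {p : Fin n × Fin n // p.1 < p.2 ∧ σ.get p.1 = true} =>
        (⟨s(p.1.1, p.1.2), by
          rcases p with ⟨⟨i, j⟩, hij, hσ⟩
          simp only [SimpleGraph.mem_edgeSet, threshOf]
          exact ⟨ne_of_lt hij, by simpa [min_eq_left (le_of_lt hij)] using hσ⟩⟩ :
          (threshOf σ).edgeSet)) := by
    constructor
    · rintro ⟨⟨i, j⟩, hij, hi⟩ ⟨⟨i', j'⟩, hij', hi'⟩ h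
      simp only [Subtype.mk.injEq, Sym2.eq, Sym2.rel_iff', Prod.mk.injEq, Prod.swap_prod_mk] at h
      rcases h with ⟨h1, h2⟩ | ⟨h1, h2⟩
      · simp [h1, h2]
      · exfalso; subst h1; subst h2; exact absurd hij' (not_lt.mpr (le_of_lt hij))
    · rintro ⟨e, he⟩
      induction e using Sym2.ind with
      | _ i j =>
        rw [SimpleGraph.mem_edgeSet] at he
        obtain ⟨hne, hmin⟩ := he
        rcases lt_or_gt_of_ne hne with h | h
        · exact ⟨⟨(i, j), h, by simpa [min_eq_left (le_of_lt h)] using hmin⟩, rfl⟩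
        · refine ⟨⟨(j, i), h, by simpa [min_eq_right (le_of_lt h)] using hmin⟩, ?_⟩
          simp [Sym2.eq_swap]
  rw [edgeCount, ← Nat.card_eq_of_bijective _ hbij, Nat.card_eq_fintype_card,
    Fintype.card_subtype, wt_eq_sum]
  rw [← Finset.univ_product_univ, Finset.card_filter, Finset.sum_product]
  apply Finset.sum_congr rfl
  intro i _
  by_cases hσ : σ.get i = true
  · simp only [hσ, and_true, if_true]
    rw [← Finset.card_filter]
    have : (Finset.univ.filter (fun j : Fin n => i < j)) = Finset.Ioi i := by
      ext j; simp
    rw [this, Fin.card_Ioi]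
  · simp only [List.get_eq_getElem] at hσ
    simp [hσ]

lemma wt_append (x y : List Bool) :
    wt (x ++ y) = wt x + x.count true * y.length + wt y := by
  induction x with
  | nil => simp [wt]
  | cons b s ih =>
    simp only [List.cons_append, wt, List.length_append, List.count_cons, ih]
    cases b <;> simp [ih] <;> ring

lemma wt_replicate_false (t : ℕ) : wt (List.replicate t false) = 0 := by
  induction t with
  | zero => rfl
  | succ t ih => simp [List.replicate_succ, wt, ih]

lemma wt_replicate_true (t : ℕ) : wt (List.replicate t true) = t * (t - 1) / 2 := by
  rw [← Finset.sum_range_id]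
  induction t with
  | zero => rfl
  | succ t ih => rw [List.replicate_succ, Finset.sum_range_succ]; simp [wt, ih]; omega

lemma wt_map_not (σ : List Bool) :
    wt (σ.map not) + wt σ = σ.length * (σ.length - 1) / 2 := by
  rw [← wt_replicate_true σ.length]
  induction σ with
  | nil => rfl
  | cons b s ih =>
    simp only [List.map_cons, wt, List.length_map, List.replicate_succ, List.length_cons,
      List.length_replicate]
    cases b <;> simp <;> omega

def word (j k : ℕ) : List Bool :=
  (List.replicate j [true, false] ++ List.replicate k [false, true]).flatten

lemma word_zero_succ (k : ℕ) : word 0 (k + 1) = false :: true :: word 0 k := by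
  simp [word, List.replicate_succ]

lemma word_succ (j k : ℕ) : word (j + 1) k = true :: false :: word j k := by
  simp [word, List.replicate_succ]

lemma word_length (j k : ℕ) : (word j k).length = 2 * (j + k) := by
  induction j with
  | zero =>
    induction k with
    | zero => rfl
    | succ k ih => rw [word_zero_succ]; simp at ih ⊢; omega
  | succ j ih => rw [word_succ]; simp at ih ⊢; omega

lemma word_count (j k : ℕ) : (word j k).count true = j + k := by
  induction j with
  | zero =>
    induction k with
    | zero => rfl
    | succ k ih => rw [word_zero_succ]; simp [List.count_cons] at ih ⊢; omega
  | succ j ih => rw [word_succ]; simp [List.count_cons] at ih ⊢; omega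

lemma word_wt (j k : ℕ) : wt (word j k) = (j + k) * (j + k - 1) + j := by
  induction j with
  | zero =>
    induction k with
    | zero => rfl
    | succ k ih =>
      rw [word_zero_succ]
      simp only [wt, List.length_cons, word_length, if_true, if_neg (by simp : ¬false = true)]
      simp at ih
      cases k with
      | zero => simp [ih]
      | succ p =>
        rw [ih]
        have h3 : ∀ q : ℕ, q + 1 - 1 = q := fun q => rfl
        simp only [h3, Nat.zero_add, Nat.add_zero]
        ring
  | succ j ih =>
    rw [word_succ]
    simp only [wt, List.length_cons, word_length, if_true, if_neg (by simp : ¬false = true)]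
    rw [ih]
    cases (Nat.eq_zero_or_pos (j + k)) with
    | inl h =>
      obtain ⟨rfl, rfl⟩ : j = 0 ∧ k = 0 := by omega
      simp [word, wt]
    | inr h =>
      have h1 : j + 1 + k - 1 = j + k := by omega
      have h2 : j + k - 1 + 1 = j + k := by omega
      rw [h1]
      nlinarith [h2]

lemma isABWord_word (j k : ℕ) : IsABWord (word j k) := by
  induction j with
  | zero =>
    induction k with
    | zero => exact IsABWord.nil
    | succ k ih => rw [word_zero_succ]; exact IsABWord.a ih
  | succ j ih => rw [word_succ]; exact IsABWord.b ih

lemma isABWord_map_not {w : List Bool} (h : IsABWord w) : IsABWord (w.map not) := by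
  induction h with
  | nil => exact IsABWord.nil
  | a _ ih => simpa using IsABWord.b ih
  | b _ ih => simpa using IsABWord.a ih

lemma isAA_of (t : ℕ) (c : Bool) (w tail : List Bool) (hw : IsABWord w)
    (ht : tail = [] ∨ ∃ d, tail = [d]) :
    IsAlmostAltCode (List.replicate t c ++ w ++ tail) := by
  refine ⟨_, ⟨rfl, rfl⟩, t, c, w, hw, ?_⟩
  rcases ht with rfl | ⟨d, rfl⟩
  · left; simp
  · right; exact ⟨d, rfl⟩

lemma small_AA (n s : ℕ) (hn : 1 ≤ n) (hs : 4 * s ≤ n * (n - 1)) :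
    ∃ (t : ℕ) (w tail : List Bool), IsABWord w ∧ (tail = [] ∨ ∃ d, tail = [d]) ∧
      (List.replicate t false ++ w ++ tail).length = n ∧
      wt (List.replicate t false ++ w ++ tail) = s := by
  obtain ⟨u, rfl⟩ : ∃ u, n = u + 1 := ⟨n - 1, by omega⟩
  have hsu : 4 * s ≤ (u + 1) * u := by simpa using hs
  set m := Nat.sqrt s with hm
  have h1 : m * m ≤ s := by simpa [pow_two] using Nat.sqrt_le' s
  have h2 : s < (m + 1) * (m + 1) := by simpa [pow_two, Nat.succ_eq_add_one] using Nat.lt_succ_sqrt' s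
  have hid : m * (m - 1) + m = m * m := by
    cases m with
    | zero => rfl
    | succ p => simp [Nat.succ_sub_one]; ring
  have e1 : (m + 1) * (m + 1) = m * m + 2 * m + 1 := by ring
  have e2 : (m + 1) * m = m * m + m := by ring
  have e3 : (m + 1) * (m + 1 - 1) = m * m + m := by
    simpa using e2
  by_cases hc : s ≤ m * m + m
  · -- starred case
    have hmn : 2 * m + 1 ≤ u + 1 := by
      by_contra hcon
      push_neg at hcon
      have hu1 : u + 1 ≤ 2 * m := by omega
      have hmul : (u + 1) * u ≤ (2 * m) * u := Nat.mul_le_mul_right u hu1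
      nlinarith
    refine ⟨u + 1 - (2 * m + 1), word (s - m * m) (m - (s - m * m)), [false],
      isABWord_word _ _, Or.inr ⟨false, rfl⟩, ?_, ?_⟩
    · simp [word_length]; omega
    · rw [wt_append, wt_append, wt_replicate_false, word_wt, List.count_append,
        List.count_replicate, word_count]
      have hj : s - m * m + (m - (s - m * m)) = m := by omega
      rw [hj]
      simp [wt]
      omega
  · -- unstarred case
    have hs2 : m * m + m + 1 ≤ s := by omega
    have hmn : 2 * m + 2 ≤ u + 1 := by
      by_contra hcon
      push_neg at hcon
      have hu1 : u ≤ 2 * m := by omega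
      have hmul : (u + 1) * u ≤ (2 * m + 1) * (2 * m) :=
        Nat.mul_le_mul (by omega) hu1
      nlinarith
    refine ⟨u + 1 - (2 * m + 2), word (s - (m * m + m)) (m + 1 - (s - (m * m + m))), [],
      isABWord_word _ _, Or.inl rfl, ?_, ?_⟩
    · simp [word_length]; omega
    · rw [wt_append, wt_append, wt_replicate_false, word_wt, List.count_append,
        List.count_replicate, word_count]
      have hj : s - (m * m + m) + (m + 1 - (s - (m * m + m))) = m + 1 := by omega
      rw [hj]
      have hid2 : (m + 1) * (m + 1 - 1) = m * m + m := by
        simp [Nat.succ_sub_one]; ring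
      simp [wt, hid2]
      omega


/-- For all `n ≥ 0` and `0 ≤ e ≤ n(n−1)/2`, there exists an almost
alternating threshold graph on `n` vertices with exactly `e` edges. -/
theorem almost_alternating_exists (n e : ℕ) (he : e ≤ n * (n - 1) / 2) :
    ∃ σ : List Bool, σ.length = n ∧ IsAlmostAltCode σ ∧
      edgeCount (threshOf σ) = e := by
  rcases Nat.eq_zero_or_pos n with rfl | hn
  · have he0 : e = 0 := by omega
    refine ⟨[], rfl, ⟨[], ⟨rfl, rfl⟩, 0, false, [], IsABWord.nil, Or.inl rfl⟩, ?_⟩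
    rw [edgeCount_threshOf, he0]
    rfl
  · set T := n * (n - 1) / 2 with hT
    have hT2 : T * 2 ≤ n * (n - 1) := Nat.div_mul_le_self _ _
    by_cases hc : 2 * e ≤ T
    · obtain ⟨t, w, tail, hw, htail, hlen, hwt⟩ := small_AA n e hn (by omega)
      exact ⟨_, hlen, isAA_of t false w tail hw htail,
        by rw [edgeCount_threshOf, hwt]⟩
    · obtain ⟨t, w, tail, hw, htail, hlen, hwt⟩ := small_AA n (T - e) hn (by omega)
      refine ⟨(List.replicate t false ++ w ++ tail).map not, by simpa using hlen, ?_, ?_⟩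
      · have hmap : (List.replicate t false ++ w ++ tail).map not
            = List.replicate t true ++ w.map not ++ tail.map not := by
          simp
        rw [hmap]
        refine isAA_of t true _ _ (isABWord_map_not hw) ?_
        rcases htail with rfl | ⟨d, rfl⟩
        · left; rfl
        · right; exact ⟨!d, rfl⟩
      · rw [edgeCount_threshOf]
        have h3 := wt_map_not (List.replicate t false ++ w ++ tail)
        rw [hlen, hwt, ← hT] at h3
        omega
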